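/- Let F be a field with a discrete valuation ord, and define deg(x) = -ord(x) for x in the valuation ring's field of fractions. Let P(x) = Σ_{i=0}^{d_P} c_{P,d_P-i} x^i and Q(x) = Σ_{j=0}^{d_Q} c_{Q,d_Q-j} x^j with coefficients in F, where the leading coefficients c_{P,0}, c_{Q,0} have deg = 0 (they are 'constants'), d_P ≥ d_Q + 2, and d := d_P, s := d_P - d_Q. Let m_1 = max_{1≤i≤d_P} deg(c_{P,i})/i, m_2 = max_{1≤j≤d_Q} deg(c_{Q,j})/j, m = m_1 + m_2. Let a, b ∈ F with d_a = deg(a), d_b = deg(b), and d_c := d_a - d_b > m. Define A_0 = a, B_0 = b, A_{n+1} = P̃(A_n, B_n), B_{n+1} = Q̃(A_n, B_n) where P̃, Q̃ are the homogenizations of P, Q. Then for all n ≥ 1, deg(A_n) = d_a · d^n and deg(B_n) = d_a · d^n − d_c · s^n. -/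

import Mathlib

/-- degree growth of the numerators and denominators of the iterates
`f^n(c) = A_n / B_n` for a family of rational maps with `d_P ≥ d_Q + 2`, constant
leading coefficients, and `deg c > m = m₁ + m₂`.  Here `deg` is the negative of a
discrete valuation on the function field `F`: it is additive on products, satisfies
`deg(x+y) ≤ max(deg x, deg y)` with equality when the degrees differ. -/
theorem stmt1 {F : Type*} [Field F]
    (deg : F → ℤ)
    (hmul : ∀ x y : F, x ≠ 0 → y ≠ 0 → deg (x * y) = deg x + deg y)
    (hadd : ∀ x y : F, x ≠ 0 → y ≠ 0 → x + y ≠ 0 → deg (x + y) ≤ max (deg x) (deg y))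
    (hadd' : ∀ x y : F, x ≠ 0 → y ≠ 0 → deg x ≠ deg y →
      x + y ≠ 0 ∧ deg (x + y) = max (deg x) (deg y))
    (dP dQ : ℕ) (hdPQ : dQ + 2 ≤ dP)
    (cP cQ : ℕ → F)
    (hcP0 : cP 0 ≠ 0) (hcP0deg : deg (cP 0) = 0)
    (hcQ0 : cQ 0 ≠ 0) (hcQ0deg : deg (cQ 0) = 0)
    (m1 m2 : ℚ) (hm1pos : 0 ≤ m1) (hm2pos : 0 ≤ m2)
    (hm1 : ∀ i : ℕ, 1 ≤ i → i ≤ dP → cP i ≠ 0 → (deg (cP i) : ℚ) ≤ m1 * i)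
    (hm2 : ∀ j : ℕ, 1 ≤ j → j ≤ dQ → cQ j ≠ 0 → (deg (cQ j) : ℚ) ≤ m2 * j)
    (a b : F) (ha : a ≠ 0) (hb : b ≠ 0)
    (dc : ℤ) (hdc : dc = deg a - deg b)
    (hdcm : (m1 + m2 : ℚ) < (dc : ℚ))
    (An Bn : ℕ → F) (hA0 : An 0 = a) (hB0 : Bn 0 = b)
    -- `A_{n+1} = P̃(A_n, B_n)` with `P̃(X,Y) = ∑_{k=0}^{d_P} c_{P,k} X^{d_P-k} Y^k`
    (hAn : ∀ n, An (n + 1) =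
      ∑ k ∈ Finset.range (dP + 1), cP k * (An n) ^ (dP - k) * (Bn n) ^ k)
    -- `B_{n+1} = B_n^{s} Q̃(A_n, B_n)` with `Q̃(X,Y) = ∑_{k=0}^{d_Q} c_{Q,k} X^{d_Q-k} Y^k`
    (hBn : ∀ n, Bn (n + 1) =
      ∑ k ∈ Finset.range (dQ + 1), cQ k * (An n) ^ (dQ - k) * (Bn n) ^ (k + (dP - dQ))) :
    ∀ n : ℕ, 1 ≤ n → An n ≠ 0 ∧ Bn n ≠ 0 ∧
      deg (An n) = deg a * (dP : ℤ) ^ n ∧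
      deg (Bn n) = deg a * (dP : ℤ) ^ n - dc * ((dP - dQ : ℕ) : ℤ) ^ n := by

  -- `deg 1 = 0`
  have hdeg1 : deg 1 = 0 := by
    have h := hmul 1 1 one_ne_zero one_ne_zero
    rw [one_mul] at h; linarith
  -- degree of powers
  have hpow : ∀ (x : F), x ≠ 0 → ∀ k : ℕ, deg (x ^ k) = k * deg x := by
    intro x hx k
    induction k with
    | zero => simpa using hdeg1
    | succ k ih =>
      rw [pow_succ, hmul _ _ (pow_ne_zero _ hx) hx, ih]
      push_cast; ring
  -- a sum of terms all of degree `< D` is zero or has degree `< D`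
  have hsum_lt : ∀ (s : Finset ℕ) (f : ℕ → F) (D : ℤ),
      (∀ i ∈ s, f i ≠ 0 → deg (f i) < D) →
      (∑ i ∈ s, f i) = 0 ∨ ((∑ i ∈ s, f i) ≠ 0 ∧ deg (∑ i ∈ s, f i) < D) := by
    intro s f D h
    induction s using Finset.cons_induction with
    | empty => simp
    | cons a s has ih =>
      rw [Finset.sum_cons]
      have h' : ∀ i ∈ s, f i ≠ 0 → deg (f i) < D :=
        fun i hi => h i (Finset.mem_cons_of_mem hi)
      rcases ih h' with h0 | ⟨hne, hlt⟩
      · rw [h0, add_zero]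
        by_cases hfa : f a = 0
        · exact Or.inl hfa
        · exact Or.inr ⟨hfa, h a (Finset.mem_cons_self a s) hfa⟩
      · by_cases hfa : f a = 0
        · rw [hfa, zero_add]; exact Or.inr ⟨hne, hlt⟩
        · by_cases hz : f a + ∑ i ∈ s, f i = 0
          · exact Or.inl hz
          · refine Or.inr ⟨hz, lt_of_le_of_lt (hadd _ _ hfa hne hz) ?_⟩
            exact max_lt (h a (Finset.mem_cons_self a s) hfa) hlt
  -- a sum with a strictly dominant term at index `0`
  have hsum_dom : ∀ (N : ℕ) (f : ℕ → F),
      f 0 ≠ 0 →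
      (∀ i : ℕ, 1 ≤ i → i ≤ N → f i ≠ 0 → deg (f i) < deg (f 0)) →
      (∑ i ∈ Finset.range (N + 1), f i) ≠ 0 ∧
        deg (∑ i ∈ Finset.range (N + 1), f i) = deg (f 0) := by
    intro N f h0 h
    rw [Finset.sum_range_succ']
    rcases hsum_lt (Finset.range N) (fun i => f (i + 1)) (deg (f 0))
        (fun i hi hne => h (i + 1) (by omega)
          (by have := Finset.mem_range.mp hi; omega) hne) with hz | ⟨hTne, hTlt⟩
    · rw [hz, zero_add]; exact ⟨h0, rfl⟩
    · have hmain := hadd' _ (f 0) hTne h0 (ne_of_lt hTlt)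
      exact ⟨hmain.1, by rw [hmain.2, max_eq_right (le_of_lt hTlt)]⟩
  set S : ℤ := ((dP - dQ : ℕ) : ℤ) with hSdef
  have hS2 : (2 : ℤ) ≤ S := by
    rw [hSdef]
    have h2 : 2 ≤ dP - dQ := by omega
    exact_mod_cast h2
  have hdcpos : 0 < dc := by
    have h0 : (0 : ℚ) < (dc : ℚ) := lt_of_le_of_lt (add_nonneg hm1pos hm2pos) hdcm
    exact_mod_cast h0
  have hDS : (dQ : ℤ) + S = (dP : ℤ) := by
    rw [hSdef, Nat.cast_sub (by omega)]; ring
  have key : ∀ n : ℕ, An n ≠ 0 ∧ Bn n ≠ 0 ∧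
      deg (An n) = deg a * (dP : ℤ) ^ n ∧
      deg (Bn n) = deg a * (dP : ℤ) ^ n - dc * S ^ n := by
    intro n
    induction n with
    | zero =>
      refine ⟨by rw [hA0]; exact ha, by rw [hB0]; exact hb, by simp [hA0], ?_⟩
      simp only [hB0, pow_zero, mul_one]
      omega
    | succ n ih =>
      obtain ⟨hA, hB, hdA, hdB⟩ := ih
      have hSn : (1 : ℤ) ≤ S ^ n := one_le_pow₀ (by linarith)
      have gap : (deg (An n)) - deg (Bn n) = dc * S ^ n := by rw [hdA, hdB]; ring
      -- coefficient bounds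
      have hcPlt : ∀ k : ℕ, 1 ≤ k → k ≤ dP → cP k ≠ 0 →
          deg (cP k) < (k : ℤ) * (dc * S ^ n) := by
        intro k h1 h2 hne
        have hq := hm1 k h1 h2 hne
        have hfin : (deg (cP k) : ℚ) < (k : ℚ) * ((dc : ℚ) * (S : ℚ) ^ n) := by
          have hk1 : (1 : ℚ) ≤ (k : ℚ) := by exact_mod_cast h1
          have hSnq : (1 : ℚ) ≤ (S : ℚ) ^ n := by exact_mod_cast hSn
          have hdcq : (0 : ℚ) < (dc : ℚ) := by exact_mod_cast hdcpos
          have hkpos : (0 : ℚ) < (k : ℚ) := by linarith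
          have t1 : m1 * (k : ℚ) < (dc : ℚ) * k :=
            mul_lt_mul_of_pos_right (by linarith) hkpos
          have t3 : (dc : ℚ) * k ≤ (dc : ℚ) * (S : ℚ) ^ n * k := by
            have h := mul_le_mul_of_nonneg_right
              (mul_le_mul_of_nonneg_left hSnq (le_of_lt hdcq)) (le_of_lt hkpos)
            simpa [mul_one] using h
          have hfin' : (deg (cP k) : ℚ) < (dc : ℚ) * (S : ℚ) ^ n * k := by linarith
          linarith [hfin', (by ring : (dc : ℚ) * (S : ℚ) ^ n * k = (k : ℚ) * ((dc : ℚ) * (S : ℚ) ^ n))]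
        exact_mod_cast hfin
      have hcQlt : ∀ k : ℕ, 1 ≤ k → k ≤ dQ → cQ k ≠ 0 →
          deg (cQ k) < (k : ℤ) * (dc * S ^ n) := by
        intro k h1 h2 hne
        have hq := hm2 k h1 h2 hne
        have hfin : (deg (cQ k) : ℚ) < (k : ℚ) * ((dc : ℚ) * (S : ℚ) ^ n) := by
          have hk1 : (1 : ℚ) ≤ (k : ℚ) := by exact_mod_cast h1
          have hSnq : (1 : ℚ) ≤ (S : ℚ) ^ n := by exact_mod_cast hSn
          have hdcq : (0 : ℚ) < (dc : ℚ) := by exact_mod_cast hdcpos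
          have hkpos : (0 : ℚ) < (k : ℚ) := by linarith
          have t1 : m2 * (k : ℚ) < (dc : ℚ) * k :=
            mul_lt_mul_of_pos_right (by linarith) hkpos
          have t3 : (dc : ℚ) * k ≤ (dc : ℚ) * (S : ℚ) ^ n * k := by
            have h := mul_le_mul_of_nonneg_right
              (mul_le_mul_of_nonneg_left hSnq (le_of_lt hdcq)) (le_of_lt hkpos)
            simpa [mul_one] using h
          have hfin' : (deg (cQ k) : ℚ) < (dc : ℚ) * (S : ℚ) ^ n * k := by linarith
          linarith [hfin', (by ring : (dc : ℚ) * (S : ℚ) ^ n * k = (k : ℚ) * ((dc : ℚ) * (S : ℚ) ^ n))]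
        exact_mod_cast hfin
      have hgapk : ∀ k : ℕ, (k : ℤ) * (dc * S ^ n) =
          (k : ℤ) * deg (An n) - (k : ℤ) * deg (Bn n) := by
        intro k; rw [← gap]; ring
      -- the step for `An`
      have hf0ne : cP 0 * (An n) ^ (dP - 0) * (Bn n) ^ 0 ≠ 0 := by
        simpa using mul_ne_zero hcP0 (pow_ne_zero _ hA)
      have hdf0 : deg (cP 0 * (An n) ^ (dP - 0) * (Bn n) ^ 0) = (dP : ℤ) * deg (An n) := by
        simp only [Nat.sub_zero, pow_zero, mul_one]
        rw [hmul _ _ hcP0 (pow_ne_zero _ hA), hcP0deg, hpow _ hA, zero_add]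
      have hAstep := hsum_dom dP (fun k => cP k * (An n) ^ (dP - k) * (Bn n) ^ k) hf0ne ?_
      · have hAne : An (n + 1) ≠ 0 := by rw [hAn n]; exact hAstep.1
        have hAdeg : deg (An (n + 1)) = deg a * (dP : ℤ) ^ (n + 1) := by
          rw [hAn n, hAstep.2]
          show deg (cP 0 * (An n) ^ (dP - 0) * (Bn n) ^ 0) = _
          rw [hdf0, hdA]; ring
        -- the step for `Bn`
        have hg0ne : cQ 0 * (An n) ^ (dQ - 0) * (Bn n) ^ (0 + (dP - dQ)) ≠ 0 :=
          mul_ne_zero (mul_ne_zero hcQ0 (pow_ne_zero _ hA)) (pow_ne_zero _ hB)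
        have hdg0 : deg (cQ 0 * (An n) ^ (dQ - 0) * (Bn n) ^ (0 + (dP - dQ))) =
            (dQ : ℤ) * deg (An n) + S * deg (Bn n) := by
          rw [hmul _ _ (mul_ne_zero hcQ0 (pow_ne_zero _ hA)) (pow_ne_zero _ hB),
            hmul _ _ hcQ0 (pow_ne_zero _ hA), hcQ0deg, hpow _ hA, hpow _ hB, zero_add]
          simp only [Nat.sub_zero, Nat.zero_add]
          rw [← hSdef]
        have hBstep := hsum_dom dQ
            (fun k => cQ k * (An n) ^ (dQ - k) * (Bn n) ^ (k + (dP - dQ))) hg0ne ?_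
        · have hBne : Bn (n + 1) ≠ 0 := by rw [hBn n]; exact hBstep.1
          have hBdeg : deg (Bn (n + 1)) = deg a * (dP : ℤ) ^ (n + 1) - dc * S ^ (n + 1) := by
            rw [hBn n, hBstep.2]
            show deg (cQ 0 * (An n) ^ (dQ - 0) * (Bn n) ^ (0 + (dP - dQ))) = _
            rw [hdg0, hdA, hdB]
            linear_combination (deg a * (dP : ℤ) ^ n) * hDS
          exact ⟨hAne, hBne, hAdeg, hBdeg⟩
        · -- bound for the non-leading terms of `Bn`
          intro k h1 h2 hne
          have hcQk : cQ k ≠ 0 := by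
            intro h; exact hne (by simp [h])
          show deg (cQ k * (An n) ^ (dQ - k) * (Bn n) ^ (k + (dP - dQ))) <
            deg (cQ 0 * (An n) ^ (dQ - 0) * (Bn n) ^ (0 + (dP - dQ)))
          rw [hdg0, hmul _ _ (mul_ne_zero hcQk (pow_ne_zero _ hA)) (pow_ne_zero _ hB),
            hmul _ _ hcQk (pow_ne_zero _ hA), hpow _ hA, hpow _ hB,
            Nat.cast_sub h2, Nat.cast_add]
          have hb1 := hcQlt k h1 h2 hcQk
          rw [hgapk k] at hb1
          rw [← hSdef]
          nlinarith [hb1]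
      · -- bound for the non-leading terms of `An`
        intro k h1 h2 hne
        have hcPk : cP k ≠ 0 := by
          intro h; exact hne (by simp [h])
        show deg (cP k * (An n) ^ (dP - k) * (Bn n) ^ k) <
          deg (cP 0 * (An n) ^ (dP - 0) * (Bn n) ^ 0)
        rw [hdf0, hmul _ _ (mul_ne_zero hcPk (pow_ne_zero _ hA)) (pow_ne_zero _ hB),
          hmul _ _ hcPk (pow_ne_zero _ hA), hpow _ hA, hpow _ hB, Nat.cast_sub h2]
        have hb1 := hcPlt k h1 h2 hcPk
        rw [hgapk k] at hb1
        nlinarith [hb1]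
  intro n _
  exact key n
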